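/- Let d ≥ 2. Define configurations p, q : {1,...,2^{d-1}+3} → ℝ^d as follows. Enumerate the vertices w₁,...,w_{2^{d-2}} of the cube {±1}^{d-2} ⊂ ℝ^{d-2}. Set p₁ = (0,2,0,...,0), p₂ = (-1/4,1/2,0,...,0), p₃ = (21/20,9/10,0,...,0), p_{2j} = (-1,0,w_{j-1}), p_{2j+1} = (1,0,w_{j-1}) for 2 ≤ j ≤ 2^{d-2}+1; and q₁ = p₁, q₂ = (-21/20,9/10,0,...,0), q₃ = (1/4,1/2,0,...,0), q_k = p_k for k ≥ 4. Let G_d be the graph on {1,...,2^{d-1}+3} whose edges are: all pairs within {1,4,5,...,2^{d-1}+3}; {1,2} and {2,2k} for 2 ≤ k ≤ 2^{d-2}+1; {1,3} and {3,2k+1} for 2 ≤ k ≤ 2^{d-2}+1; and {2,3}. Then for every edge {i,j} of G_d, |pᵢ - pⱼ| = |qᵢ - qⱼ|, but |p₂ - p₅| ≠ |q₂ - q₅|. Hence the framework G_d(p) is not globally rigid in ℝ^d. -/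

import Mathlib

/-- The point of ℝ^d with first coordinate `a`, second coordinate `b`, and remaining
`d-2` coordinates given by `w`. -/
noncomputable def vec (d : ℕ) (a b : ℝ) (w : Fin (d-2) → ℝ) : EuclideanSpace ℝ (Fin d) :=
  WithLp.toLp 2 (fun i : Fin d => if i.1 = 0 then a else if i.1 = 1 then b else
    if h : i.1 - 2 < d - 2 then w ⟨i.1 - 2, h⟩ else 0)

/-- Membership in the "hub" vertex set {1, 4, 5, ..., 2^(d-1)+3} (1-based labels). -/
def IsHub (d m : ℕ) : Prop := m = 1 ∨ (4 ≤ m ∧ m ≤ 2^(d-1)+3)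

/-- The edge set of the graph G_d on {1, ..., 2^(d-1)+3}: all pairs of hub vertices;
{1,2} and {2,2k} for 2 ≤ k ≤ 2^(d-2)+1; {1,3} and {3,2k+1} for 2 ≤ k ≤ 2^(d-2)+1;
and {2,3}. -/
def Ed (d : ℕ) : Set (ℕ × ℕ) :=
  {e | (IsHub d e.1 ∧ IsHub d e.2 ∧ e.1 ≠ e.2) ∨ e = (1,2) ∨
    (∃ k, 2 ≤ k ∧ k ≤ 2^(d-2)+1 ∧ e = (2, 2*k)) ∨ e = (1,3) ∨
    (∃ k, 2 ≤ k ∧ k ≤ 2^(d-2)+1 ∧ e = (3, 2*k+1)) ∨ e = (2,3)}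

lemma dist_vec (d : ℕ) (hd : 2 ≤ d) (a b a' b' : ℝ) (w w' : Fin (d-2) → ℝ) :
    dist (vec d a b w) (vec d a' b' w') =
      Real.sqrt ((a-a')^2 + (b-b')^2 + ∑ i, (w i - w' i)^2) := by
  classical
  set g : ℕ → ℝ := fun k =>
    ((if k = 0 then a else if k = 1 then b else
        if h : k - 2 < d - 2 then w ⟨k-2, h⟩ else 0) -
     (if k = 0 then a' else if k = 1 then b' else
        if h : k - 2 < d - 2 then w' ⟨k-2, h⟩ else 0))^2 with hg
  rw [EuclideanSpace.dist_eq]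
  congr 1
  have h1 : ∑ i : Fin d, dist (vec d a b w i) (vec d a' b' w' i) ^ 2
      = ∑ k ∈ Finset.range d, g k := by
    rw [← Fin.sum_univ_eq_sum_range g d]
    refine Finset.sum_congr rfl fun i _ => ?_
    rw [Real.dist_eq, sq_abs]
    simp only [hg, vec]
  rw [h1, Finset.range_eq_Ico, ← Finset.sum_Ico_consecutive g (Nat.zero_le 2) hd]
  have h2 : ∑ k ∈ Finset.Ico 0 2, g k = (a - a')^2 + (b - b')^2 := by
    rw [← Finset.range_eq_Ico, Finset.sum_range_succ, Finset.sum_range_one]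
    simp [hg]
  have h3 : ∑ k ∈ Finset.Ico 2 d, g k = ∑ i, (w i - w' i)^2 := by
    rw [Finset.sum_Ico_eq_sum_range]
    have hcg : ∀ j ∈ Finset.range (d - 2), g (2 + j) = (fun j : ℕ =>
        if h : j < d - 2 then (w ⟨j, h⟩ - w' ⟨j, h⟩)^2 else 0) j := by
      intro j hj
      rw [Finset.mem_range] at hj
      simp [hg, hj, Nat.add_sub_cancel_left, show 2+j ≠ 0 by omega, show 2+j ≠ 1 by omega]
    rw [Finset.sum_congr rfl hcg, ← Fin.sum_univ_eq_sum_range]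
    refine Finset.sum_congr rfl fun i _ => ?_
    simp [i.2]
  rw [h2, h3]


/-- The frameworks G_d(p) and G_d(q) of the d-dimensional construction are equivalent
but not congruent; hence G_d(p) is not globally rigid in ℝ^d.
Here `w k` (for 1 ≤ k ≤ 2^(d-2)) enumerates the vertices of the cube {±1}^(d-2). -/
theorem stmt_15 (d : ℕ) (hd : 2 ≤ d)
    (w : ℕ → Fin (d-2) → ℝ)
    (hw : ∀ k, 1 ≤ k → k ≤ 2^(d-2) → ∀ i, w k i = 1 ∨ w k i = -1)
    (hwinj : ∀ k l, 1 ≤ k → k ≤ 2^(d-2) → 1 ≤ l → l ≤ 2^(d-2) → w k = w l → k = l)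
    (p q : ℕ → EuclideanSpace ℝ (Fin d))
    (hp1 : p 1 = vec d 0 2 (fun _ => 0))
    (hp2 : p 2 = vec d (-1/4) (1/2) (fun _ => 0))
    (hp3 : p 3 = vec d (21/20) (9/10) (fun _ => 0))
    (hpev : ∀ j, 2 ≤ j → j ≤ 2^(d-2)+1 → p (2*j) = vec d (-1) 0 (w (j-1)))
    (hpod : ∀ j, 2 ≤ j → j ≤ 2^(d-2)+1 → p (2*j+1) = vec d 1 0 (w (j-1)))
    (hq1 : q 1 = p 1)
    (hq2 : q 2 = vec d (-21/20) (9/10) (fun _ => 0))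
    (hq3 : q 3 = vec d (1/4) (1/2) (fun _ => 0))
    (hqk : ∀ k, 4 ≤ k → k ≤ 2^(d-1)+3 → q k = p k) :
    (∀ e ∈ Ed d, dist (p e.1) (p e.2) = dist (q e.1) (q e.2)) ∧
    dist (p 2) (p 5) ≠ dist (q 2) (q 5) ∧
    ¬ (∀ q' : ℕ → EuclideanSpace ℝ (Fin d),
        (∀ e ∈ Ed d, dist (p e.1) (p e.2) = dist (q' e.1) (q' e.2)) →
        ∀ i j, 1 ≤ i → i ≤ 2^(d-1)+3 → 1 ≤ j → j ≤ 2^(d-1)+3 →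
          dist (p i) (p j) = dist (q' i) (q' j)) := by
  have hd2 : (1:ℕ) ≤ 2^(d-2) := Nat.one_le_two_pow
  have hpow : 2 * (2^(d-2) + 1) = 2^(d-1) + 2 := by
    have h : 2^(d-1) = 2 * 2^(d-2) := by
      rw [← pow_succ']
      congr 1
      omega
    omega
  have hub : ∀ m, IsHub d m → q m = p m := by
    intro m hm
    rcases hm with rfl | ⟨h4, hle⟩
    · exact hq1
    · exact hqk m h4 hle
  have hq5 : q 5 = p 5 := hqk 5 (by norm_num) (by omega)
  have hp5 : p 5 = vec d 1 0 (w 1) := by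
    have h := hpod 2 le_rfl (by omega)
    norm_num at h
    exact h
  have cube : ∀ k, 1 ≤ k → k ≤ 2^(d-2) →
      ∑ i, ((0:ℝ) - w k i)^2 = ((d-2 : ℕ) : ℝ) := by
    intro k h1 h2
    have h : ∀ i : Fin (d-2), (w k i)^2 = 1 := fun i => by
      rcases hw k h1 h2 i with h|h <;> rw [h] <;> norm_num
    simp [h]
  have part1 : ∀ e ∈ Ed d, dist (p e.1) (p e.2) = dist (q e.1) (q e.2) := by
    rintro ⟨i, j⟩ he
    rcases he with ⟨hi, hj, _⟩ | he | ⟨k, hk1, hk2, he⟩ | he | ⟨k, hk1, hk2, he⟩ | he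
    · rw [hub i hi, hub j hj]
    · simp only [Prod.mk.injEq] at he; obtain ⟨rfl, rfl⟩ := he
      rw [hq1, hp1, hp2, hq2, dist_vec d hd, dist_vec d hd]
      congr 1
      norm_num
    · simp only [Prod.mk.injEq] at he; obtain ⟨rfl, rfl⟩ := he
      rw [hp2, hq2, hpev k hk1 hk2, hqk (2*k) (by omega) (by omega), hpev k hk1 hk2,
        dist_vec d hd, dist_vec d hd]
      congr 1
      rw [cube (k-1) (by omega) (by omega)]
      norm_num
    · simp only [Prod.mk.injEq] at he; obtain ⟨rfl, rfl⟩ := he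
      rw [hp1, hp3, hq1, hp1, hq3, dist_vec d hd, dist_vec d hd]
      congr 1
      norm_num
    · simp only [Prod.mk.injEq] at he; obtain ⟨rfl, rfl⟩ := he
      rw [hp3, hq3, hpod k hk1 hk2, hqk (2*k+1) (by omega) (by omega), hpod k hk1 hk2,
        dist_vec d hd, dist_vec d hd]
      congr 1
      rw [cube (k-1) (by omega) (by omega)]
      norm_num
    · simp only [Prod.mk.injEq] at he; obtain ⟨rfl, rfl⟩ := he
      rw [hp2, hp3, hq2, hq3, dist_vec d hd, dist_vec d hd]
      congr 1
      norm_num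
  have part2 : dist (p 2) (p 5) ≠ dist (q 2) (q 5) := by
    rw [hp2, hp5, hq2, hq5, hp5, dist_vec d hd, dist_vec d hd,
      cube 1 le_rfl hd2]
    apply ne_of_lt
    apply Real.sqrt_lt_sqrt (by positivity)
    have hc : (0:ℝ) ≤ ((d-2:ℕ):ℝ) := Nat.cast_nonneg _
    nlinarith
  exact ⟨part1, part2, fun H =>
    part2 (H q part1 2 5 (by norm_num) (by omega) (by norm_num) (by omega))⟩
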